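/- For any infinite compact Hausdorff spaces K and L, the spaces C_w(K) and C_p(L) are not uniformly homeomorphic: there is no bijection Φ : C(K) → C(L) such that Φ is uniformly continuous from C_w(K) to C_p(L) and Φ⁻¹ is uniformly continuous from C_p(L) to C_w(K). -/

import Mathlib

/-- The uniformity on `C(K, ℝ)` associated with the weak topology of the Banach space `C(K)`:
the uniformity of uniform convergence on the functionals, i.e. with basic entourages
`{(f,g) : |μ (f - g)| < ε for μ ∈ F}`, `F` finite. It is induced by the canonical map into
the product `(C(K,ℝ) →L[ℝ] ℝ) → ℝ` with the product uniformity. -/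
noncomputable def weakUniformity (K : Type*) [TopologicalSpace K] [CompactSpace K] :
    UniformSpace C(K, ℝ) :=
  UniformSpace.comap (fun f (μ : C(K, ℝ) →L[ℝ] ℝ) => μ f) (Pi.uniformSpace fun _ => ℝ)

/-- The uniformity of pointwise convergence on `C(L, ℝ)`, inherited from the product
uniformity on `L → ℝ`. -/
noncomputable def pointwiseUniformity (L : Type*) [TopologicalSpace L] :
    UniformSpace C(L, ℝ) :=
  UniformSpace.comap (fun f : C(L, ℝ) => (f : L → ℝ)) (Pi.uniformSpace fun _ => ℝ)

open Set NormedSpace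

section WeakAux

variable {K : Type*} [TopologicalSpace K] [CompactSpace K]

private lemma weak_inducing :
    @IsUniformInducing C(K, ℝ) _ (weakUniformity K) _
      (fun f (μ : StrongDual ℝ C(K, ℝ)) => μ f) :=
  @IsUniformInducing.mk _ _ (weakUniformity K) _ _ rfl

/-- In the weak uniformity, totally bounded sets are norm bounded (Banach–Steinhaus). -/
private lemma weak_tb_norm_bounded {S : Set C(K, ℝ)}
    (h : @TotallyBounded _ (weakUniformity K) S) : ∃ n : ℕ, ∀ f ∈ S, ‖f‖ ≤ (n : ℝ) := by
  have hjc : @UniformContinuous _ _ (weakUniformity K) _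
      (fun f (μ : StrongDual ℝ C(K, ℝ)) => μ f) := uniformContinuous_comap
  have hj : TotallyBounded ((fun f (μ : StrongDual ℝ C(K, ℝ)) => μ f) '' S) :=
    @TotallyBounded.image _ _ (weakUniformity K) _ _ _ h hjc
  have hb : ∀ μ : StrongDual ℝ C(K, ℝ), ∃ C, ∀ f ∈ S, ‖μ f‖ ≤ C := by
    intro μ
    have h2 : TotallyBounded ((fun g : (StrongDual ℝ C(K, ℝ)) → ℝ => g μ) ''
        ((fun f (μ : StrongDual ℝ C(K, ℝ)) => μ f) '' S)) :=
      hj.image (Pi.uniformContinuous_proj _ μ)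
    obtain ⟨C, hC⟩ := isBounded_iff_forall_norm_le.1 h2.isBounded
    exact ⟨C, fun f hf => by
      simpa using hC _ ⟨_, ⟨f, hf, rfl⟩, rfl⟩⟩
  obtain ⟨C', hC'⟩ := banach_steinhaus
    (g := fun f : S => inclusionInDoubleDual ℝ C(K, ℝ) (f : C(K, ℝ)))
    (fun μ => (hb μ).imp fun C hC f => by simpa using hC f f.2)
  refine ⟨⌈C'⌉₊, fun f hf => ?_⟩
  have h1 : ‖f‖ = ‖inclusionInDoubleDual ℝ C(K, ℝ) f‖ :=
    ((inclusionInDoubleDualLi ℝ (E := C(K, ℝ))).norm_map f).symm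
  calc ‖f‖ = ‖inclusionInDoubleDual ℝ C(K, ℝ) f‖ := h1
    _ ≤ C' := hC' ⟨f, hf⟩
    _ ≤ (⌈C'⌉₊ : ℝ) := Nat.le_ceil C'

/-- Norm bounded sets are totally bounded in the weak uniformity. -/
private lemma weak_tb_of_norm_bounded {S : Set C(K, ℝ)} {n : ℝ} (h : ∀ f ∈ S, ‖f‖ ≤ n) :
    @TotallyBounded _ (weakUniformity K) S := by
  have htb : TotallyBounded ((fun f (μ : StrongDual ℝ C(K, ℝ)) => μ f) '' S) := by
    refine TotallyBounded.subset ?_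
      ((isCompact_univ_pi fun μ : StrongDual ℝ C(K, ℝ) =>
        (isCompact_Icc (a := -(‖μ‖ * n)) (b := ‖μ‖ * n))).totallyBounded)
    rintro g ⟨f, hf, rfl⟩
    refine mem_univ_pi.2 fun μ => ?_
    have h1 : ‖μ f‖ ≤ ‖μ‖ * n :=
      (μ.le_opNorm f).trans (mul_le_mul_of_nonneg_left (h f hf) (norm_nonneg μ))
    rw [Real.norm_eq_abs, abs_le] at h1
    exact ⟨h1.1, h1.2⟩
  exact (@totallyBounded_image_iff _ _ (weakUniformity K) _ _ _ weak_inducing).1 htb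

end WeakAux

section PointwiseAux

variable {L : Type*} [TopologicalSpace L]

private lemma pw_inducing :
    @IsUniformInducing C(L, ℝ) _ (pointwiseUniformity L) _
      (fun f : C(L, ℝ) => (f : L → ℝ)) :=
  @IsUniformInducing.mk _ _ (pointwiseUniformity L) _ _ rfl

/-- In the pointwise uniformity, totally bounded sets are pointwise bounded. -/
private lemma pw_tb_eval_bounded {S : Set C(L, ℝ)}
    (h : @TotallyBounded _ (pointwiseUniformity L) S) (x : L) :
    ∃ C, ∀ f ∈ S, |f x| ≤ C := by
  have hjc : @UniformContinuous _ _ (pointwiseUniformity L) _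
      (fun f : C(L, ℝ) => (f : L → ℝ)) := uniformContinuous_comap
  have hj : TotallyBounded ((fun f : C(L, ℝ) => (f : L → ℝ)) '' S) :=
    @TotallyBounded.image _ _ (pointwiseUniformity L) _ _ _ h hjc
  have h2 : TotallyBounded ((fun g : L → ℝ => g x) ''
      ((fun f : C(L, ℝ) => (f : L → ℝ)) '' S)) :=
    hj.image (Pi.uniformContinuous_proj _ x)
  obtain ⟨C, hC⟩ := isBounded_iff_forall_norm_le.1 h2.isBounded
  exact ⟨C, fun f hf => by
    simpa [Real.norm_eq_abs] using hC _ ⟨_, ⟨f, hf, rfl⟩, rfl⟩⟩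

/-- Pointwise bounded sets are totally bounded in the pointwise uniformity. -/
private lemma pw_tb_of_bounded {S : Set C(L, ℝ)} {M : L → ℝ}
    (h : ∀ f ∈ S, ∀ x, |f x| ≤ M x) :
    @TotallyBounded _ (pointwiseUniformity L) S := by
  have htb : TotallyBounded ((fun f : C(L, ℝ) => (f : L → ℝ)) '' S) := by
    refine TotallyBounded.subset ?_
      ((isCompact_univ_pi fun x : L =>
        (isCompact_Icc (a := -(M x)) (b := M x))).totallyBounded)
    rintro g ⟨f, hf, rfl⟩
    refine mem_univ_pi.2 fun x => ?_
    have h1 := h f hf x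
    rw [abs_le] at h1
    exact ⟨h1.1, h1.2⟩
  exact (@totallyBounded_image_iff _ _ (pointwiseUniformity L) _ _ _ pw_inducing).1 htb

end PointwiseAux

/-- Every infinite Hausdorff space has an infinite family of pairwise disjoint nonempty
open sets. -/
private lemma exists_disjoint_opens (X : Type*) [TopologicalSpace X] [T2Space X] [Infinite X] :
    ∃ (U : ℕ → Set X) (x : ℕ → X), (∀ n, IsOpen (U n)) ∧ (∀ n, x n ∈ U n) ∧
      ∀ m n, m ≠ n → Disjoint (U m) (U n) := by
  classical
  by_cases hI : {x : X | IsOpen ({x} : Set X)}.Infinite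
  · let e := hI.natEmbedding _
    refine ⟨fun n => {(e n : X)}, fun n => (e n : X), fun n => (e n).2, fun n => rfl, ?_⟩
    intro m n hmn
    rw [Set.disjoint_singleton]
    exact fun hc => hmn (e.injective (Subtype.ext hc))
  · set I := {x : X | IsOpen ({x} : Set X)} with hIdef
    have hIfin : I.Finite := Set.not_infinite.1 hI
    have hA0open : IsOpen Iᶜ := hIfin.isClosed.isOpen_compl
    have hA0inf : Iᶜ.Infinite := hIfin.infinite_compl
    have key : ∀ O : Set X, IsOpen O → O.Nonempty → O ⊆ Iᶜ → O.Infinite := by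
      intro O hO hne hsub
      by_contra hinf
      rw [Set.not_infinite] at hinf
      have hfin := hinf
      obtain ⟨z, hz⟩ := hne
      have hzI : z ∈ I := by
        have h1 : IsClosed (O \ {z}) := (hfin.subset Set.diff_subset).isClosed
        have h2 : IsOpen ({z} : Set X) := by
          have : ({z} : Set X) = O ∩ (O \ {z})ᶜ := by
            ext w
            simp only [Set.mem_singleton_iff, Set.mem_inter_iff, Set.mem_compl_iff,
              Set.mem_diff, not_and, not_not]
            constructor
            · rintro rfl; exact ⟨hz, fun _ => rfl⟩
            · rintro ⟨hw, hw2⟩; exact hw2 hw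
          rw [this]
          exact hO.inter h1.isOpen_compl
        exact h2
      exact (hsub hz) hzI
    have step : ∀ A : Set X, IsOpen A → A.Nonempty → A ⊆ Iᶜ →
        ∃ V W : Set X, (IsOpen V ∧ V.Nonempty ∧ V ⊆ A) ∧
          (IsOpen W ∧ W.Nonempty ∧ W ⊆ A) ∧ Disjoint V W := by
      intro A hA hne hsub
      obtain ⟨a, ha, b, hb, hab⟩ := (key A hA hne hsub).nontrivial
      obtain ⟨Sa, Sb, hSa, hSb, haS, hbS, hST⟩ := t2_separation hab
      exact ⟨A ∩ Sa, A ∩ Sb,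
        ⟨hA.inter hSa, ⟨a, ha, haS⟩, Set.inter_subset_left⟩,
        ⟨hA.inter hSb, ⟨b, hb, hbS⟩, Set.inter_subset_left⟩,
        hST.mono Set.inter_subset_right Set.inter_subset_right⟩
    choose! V W hV hW hVW using step
    set A : ℕ → Set X := fun n => Nat.rec Iᶜ (fun _ prev => W prev) n with hAdef
    have hAsucc : ∀ n, A (n + 1) = W (A n) := fun n => rfl
    have hAprop : ∀ n, IsOpen (A n) ∧ (A n).Nonempty ∧ A n ⊆ Iᶜ := by
      intro n
      induction n with
      | zero => exact ⟨hA0open, hA0inf.nonempty, Set.Subset.rfl⟩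
      | succ n ih =>
        obtain ⟨h1, h2, h3⟩ := hW (A n) ih.1 ih.2.1 ih.2.2
        exact ⟨h1, h2, h3.trans ih.2.2⟩
    have hVprop : ∀ n, IsOpen (V (A n)) ∧ (V (A n)).Nonempty ∧ V (A n) ⊆ A n := fun n =>
      hV (A n) (hAprop n).1 (hAprop n).2.1 (hAprop n).2.2
    have hdisj : ∀ n, Disjoint (V (A n)) (A (n + 1)) := by
      intro n
      rw [hAsucc]
      exact hVW (A n) (hAprop n).1 (hAprop n).2.1 (hAprop n).2.2
    have hchain : ∀ m n, m < n → A n ⊆ A (m + 1) := by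
      intro m n hmn
      induction n with
      | zero => omega
      | succ n ih =>
        rcases Nat.lt_succ_iff_lt_or_eq.1 hmn with h | h
        · exact ((hW (A n) (hAprop n).1 (hAprop n).2.1 (hAprop n).2.2).2.2).trans (ih h)
        · subst h; exact Set.Subset.rfl
    have hdisjVV : ∀ m n, m < n → Disjoint (V (A m)) (V (A n)) := by
      intro m n hmn
      exact (hdisj m).mono_right ((hVprop n).2.2.trans (hchain m n hmn))
    choose x hx using fun n => (hVprop n).2.1
    refine ⟨fun n => V (A n), x, fun n => (hVprop n).1, hx, ?_⟩
    intro m n hmn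
    rcases lt_or_gt_of_ne hmn with h | h
    · exact hdisjVV m n h
    · exact (hdisjVV n m h).symm

/-- For any infinite compact Hausdorff spaces `K` and `L`, the spaces `C_w(K)` and `C_p(L)`
are not uniformly homeomorphic. -/
theorem statement0 (K L : Type*)
    [TopologicalSpace K] [CompactSpace K] [T2Space K] [Infinite K]
    [TopologicalSpace L] [CompactSpace L] [T2Space L] [Infinite L] :
    ¬ ∃ Φ : C(K, ℝ) ≃ C(L, ℝ),
        @UniformContinuous _ _ (weakUniformity K) (pointwiseUniformity L) Φ ∧
        @UniformContinuous _ _ (pointwiseUniformity L) (weakUniformity K) Φ.symm := by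
  rintro ⟨Φ, hΦ, hΦs⟩
  classical
  obtain ⟨U, x, hUopen, hxU, hUdisj⟩ := exists_disjoint_opens L
  -- The images of the balls are totally bounded in the pointwise uniformity,
  -- hence pointwise bounded.
  have hBtb : ∀ n : ℕ, @TotallyBounded _ (pointwiseUniformity L)
      (Φ '' Metric.closedBall 0 n) := by
    intro n
    have h1 : @TotallyBounded _ (weakUniformity K) (Metric.closedBall (0 : C(K, ℝ)) n) :=
      weak_tb_of_norm_bounded (n := (n : ℝ)) (fun f hf => by
        simpa [Metric.mem_closedBall, dist_zero_right] using hf)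
    exact @TotallyBounded.image _ _ (weakUniformity K) (pointwiseUniformity L) _ _ h1 hΦ
  have hM : ∀ n : ℕ, ∀ y : L, ∃ C, ∀ g ∈ Φ '' Metric.closedBall (0 : C(K, ℝ)) n, |g y| ≤ C :=
    fun n y => pw_tb_eval_bounded (hBtb n) y
  choose M hMspec using hM
  -- bump functions
  have hbump : ∀ n : ℕ, ∃ f : C(L, ℝ), f (x n) = |M n (x n)| + 1 ∧
      (∀ y, y ∉ U n → f y = 0) ∧ (∀ y, 0 ≤ f y ∧ f y ≤ |M n (x n)| + 1) := by
    intro n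
    have hclosed : IsClosed (U n)ᶜ := (hUopen n).isClosed_compl
    have hdisj : Disjoint ((U n)ᶜ) ({x n} : Set L) := by
      rw [Set.disjoint_singleton_right]
      simpa using hxU n
    obtain ⟨g, hg0, hg1, hg01⟩ :=
      exists_continuous_zero_one_of_isClosed hclosed isClosed_singleton hdisj
    refine ⟨(|M n (x n)| + 1) • g, ?_, ?_, ?_⟩
    · have : g (x n) = 1 := hg1 rfl
      simp [this]
    · intro y hy
      have : g y = 0 := hg0 hy
      simp [this]
    · intro y
      have h01 := hg01 y
      have hpos : (0 : ℝ) ≤ |M n (x n)| + 1 := by positivity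
      constructor
      · simpa using mul_nonneg hpos h01.1
      · simpa using mul_le_of_le_one_right hpos h01.2
  choose f hf1 hf0 hfb using hbump
  -- the family {f n} is pointwise bounded, hence totally bounded in the pointwise uniformity
  set T : Set C(L, ℝ) := Set.range f with hTdef
  have hTtb : @TotallyBounded _ (pointwiseUniformity L) T := by
    refine pw_tb_of_bounded (M := fun y =>
      if h : ∃ n, y ∈ U n then |M h.choose (x h.choose)| + 1 else 0) ?_
    rintro g ⟨n, rfl⟩ y
    by_cases hy : y ∈ U n
    · have hex : ∃ m, y ∈ U m := ⟨n, hy⟩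
      have hn : hex.choose = n := by
        by_contra hne
        exact (hUdisj _ _ hne).ne_of_mem hex.choose_spec hy rfl
      rw [dif_pos hex, hn]
      have := hfb n y
      rw [abs_of_nonneg this.1]
      exact this.2
    · rw [hf0 n y hy]
      simp only [abs_zero]
      by_cases hex : ∃ m, y ∈ U m
      · rw [dif_pos hex]; positivity
      · rw [dif_neg hex]
  -- pull back to the weak uniformity: the preimage is norm bounded
  have hAtb : @TotallyBounded _ (weakUniformity K) (Φ.symm '' T) :=
    @TotallyBounded.image _ _ (pointwiseUniformity L) (weakUniformity K) _ _ hTtb hΦs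
  obtain ⟨n, hn⟩ := weak_tb_norm_bounded hAtb
  -- hence T ⊆ Φ '' (closedBall 0 n), contradicting the choice of f n
  have hfn : f n ∈ Φ '' Metric.closedBall (0 : C(K, ℝ)) n := by
    refine ⟨Φ.symm (f n), ?_, Φ.apply_symm_apply _⟩
    rw [Metric.mem_closedBall, dist_zero_right]
    exact hn _ ⟨f n, ⟨n, rfl⟩, rfl⟩
  have hcontr := hMspec n (x n) _ hfn
  rw [hf1 n] at hcontr
  have h1 : M n (x n) ≤ |M n (x n)| := le_abs_self _
  have h2 : (0 : ℝ) ≤ |M n (x n)| := abs_nonneg _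
  rw [abs_of_nonneg (by linarith)] at hcontr
  linarith
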